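/- There exists a 1-D cellular automaton of radius 1 over alphabet {a, b, c, ⊥} and finite initial configuration c₀ = ⊥^ω a b c ⊥^ω such that G^n(c₀) = ⊥^ω a^{n+1} b^{n+1} c^{n+1} ⊥^ω for all n ≥ 0; hence the generated language is { aⁿ bⁿ cⁿ | n ≥ 1 }, a language that is not context-free. -/

import Mathlib

/-- Global map of a 1-D cellular automaton of radius `r` with local rule `f`. -/
def glob {α : Type*} (r : ℕ) (f : (Fin (2 * r + 1) → α) → α) (c : ℤ → α) : ℤ → α :=
  fun z => f (fun j => c (z + (j.val : ℤ) - (r : ℤ)))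

/-- The finite configuration `⊥^ω w ⊥^ω`, with `w` placed at positions `0, …, |w| - 1`. -/
def padW {α : Type*} (bot : α) (w : List α) : ℤ → α :=
  fun z => if 0 ≤ z ∧ z < (w.length : ℤ) then w.getD z.toNat bot else bot

/-- The alphabet `{a, b, c, ⊥}`. -/
inductive ABC : Type
  | a : ABC
  | b : ABC
  | c : ABC
  | bot : ABC
deriving DecidableEq


open ContextFreeGrammar

namespace MyPump
open scoped Classical

variable {T : Type} {g : ContextFreeGrammar T}

abbrev Sym (g : ContextFreeGrammar T) := Symbol T g.NT

/-- n-step derivation. -/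
inductive DerivesIn (g : ContextFreeGrammar T) : ℕ → List (Sym g) → List (Sym g) → Prop
  | refl (u : List (Sym g)) : DerivesIn g 0 u u
  | head {n u v w} (h : g.Produces u v) (hd : DerivesIn g n v w) : DerivesIn g (n+1) u w

lemma derives_iff_derivesIn {u v : List (Sym g)} :
    g.Derives u v ↔ ∃ n, DerivesIn g n u v := by
  constructor
  · intro h
    induction h using Relation.ReflTransGen.head_induction_on with
    | refl => exact ⟨0, .refl _⟩
    | head hp _ ih => exact ⟨ih.choose + 1, .head hp ih.choose_spec⟩
  · rintro ⟨n, h⟩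
    induction h with
    | refl => rfl
    | head hp _ ih => exact hp.trans_derives ih

lemma DerivesIn.derives {n : ℕ} {u v : List (Sym g)} (h : DerivesIn g n u v) :
    g.Derives u v := derives_iff_derivesIn.2 ⟨n, h⟩

lemma terminal_no_produces {w : List T} {v : List (Sym g)} :
    ¬ g.Produces (w.map Symbol.terminal) v := by
  rintro ⟨r, _, hr⟩
  obtain ⟨p, q, h1, -⟩ := hr.exists_parts
  have : (Symbol.nonterminal r.input : Sym g) ∈ w.map Symbol.terminal := by
    rw [h1]; simp
  simp at this

lemma DerivesIn.nil_eq' {n : ℕ} {u v : List (Sym g)} (h : DerivesIn g n u v) (hu : u = []) :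
    v = [] := by
  induction h with
  | refl => exact hu
  | head hp _ ih =>
    exfalso
    obtain ⟨r, -, hr⟩ := hp
    obtain ⟨p, q, h1, -⟩ := hr.exists_parts
    rw [hu] at h1
    have := congrArg List.length h1
    simp at this

lemma DerivesIn.zero_eq {u v : List (Sym g)} (h : DerivesIn g 0 u v) : u = v := by
  cases h; rfl

lemma DerivesIn.nil_eq {n : ℕ} {v : List (Sym g)} (h : DerivesIn g n [] v) : v = [] :=
  h.nil_eq' rfl

lemma terminal_derivesIn_eq {n : ℕ} {w : List T} {v : List (Sym g)}
    (h : DerivesIn g n (w.map Symbol.terminal) v) : v = w.map Symbol.terminal := by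
  cases h with
  | refl => rfl
  | head hp _ => exact absurd hp terminal_no_produces

/-- A derivation from `p ++ q` splits into derivations from `p` and from `q`. -/
lemma DerivesIn.append_split {n : ℕ} {p q w : List (Sym g)}
    (h : DerivesIn g n (p ++ q) w) :
    ∃ p' q' n₁ n₂, w = p' ++ q' ∧ n₁ + n₂ = n ∧
      DerivesIn g n₁ p p' ∧ DerivesIn g n₂ q q' := by
  induction n generalizing p q with
  | zero =>
    cases h with
    | refl => exact ⟨p, q, 0, 0, rfl, rfl, .refl _, .refl _⟩
  | succ n ih =>
    cases h with
    | head hp hd =>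
      obtain ⟨r, hrmem, hr⟩ := hp
      obtain ⟨α, β, h1, h2⟩ := hr.exists_parts
      -- p ++ q = α ++ [nonterminal r.input] ++ β
      rw [List.append_assoc] at h1
      rcases List.append_eq_append_iff.mp h1 with ⟨a', ha1, ha2⟩ | ⟨c', hc1, hc2⟩
      · -- α = p ++ a' ∧ q = a' ++ ([nt] ++ β)
        subst ha1
        have hq : r.Rewrites (a' ++ (Symbol.nonterminal r.input :: β))
            (a' ++ r.output ++ β) := by
          simpa using ContextFreeRule.rewrites_of_exists_parts r a' β
        have hd' : DerivesIn g n (p ++ (a' ++ r.output ++ β)) w := by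
          rw [h2] at hd
          simpa [List.append_assoc] using hd
        obtain ⟨p', q', n₁, n₂, hw, hn, h1', h2'⟩ := ih hd'
        refine ⟨p', q', n₁, n₂ + 1, hw, by omega, h1', .head ⟨r, hrmem, ?_⟩ h2'⟩
        rw [ha2]
        simpa using hq
      · -- p = α ++ c' ∧ [nt] ++ β = c' ++ q
        subst hc1
        cases c' with
        | nil =>
          simp at hc2
          -- [nt] ++ β = q
          have hq : r.Rewrites (Symbol.nonterminal r.input :: β) (r.output ++ β) := by
            simpa using ContextFreeRule.rewrites_of_exists_parts r [] β
          have hd' : DerivesIn g n ((α ++ []) ++ (r.output ++ β)) w := by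
            rw [h2] at hd
            simpa [List.append_assoc] using hd
          obtain ⟨p', q', n₁, n₂, hw, hn, h1', h2'⟩ := ih hd'
          refine ⟨p', q', n₁, n₂ + 1, hw, by omega, by simpa using h1',
            .head ⟨r, hrmem, ?_⟩ h2'⟩
          rw [← hc2]
          simpa using hq
        | cons s c'' =>
          have hs : Symbol.nonterminal r.input = s ∧ β = c'' ++ q := by
            have := hc2
            simp at this
            exact ⟨this.1, this.2⟩
          obtain ⟨hs1, rfl⟩ := hs
          subst hs1
          have hpre : r.Rewrites (α ++ Symbol.nonterminal r.input :: c'')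
              (α ++ r.output ++ c'') := by
            simpa using ContextFreeRule.rewrites_of_exists_parts r α c''
          have hd' : DerivesIn g n ((α ++ r.output ++ c'') ++ q) w := by
            rw [h2] at hd
            simpa [List.append_assoc] using hd
          obtain ⟨p', q', n₁, n₂, hw, hn, h1', h2'⟩ := ih hd'
          refine ⟨p', q', n₁ + 1, n₂, hw, by omega, .head ⟨r, hrmem, ?_⟩ h1', h2'⟩
          simpa using hpre



/-- Derivation forest: `TD g ss w h` means the symbol list `ss` derives the terminal word `w`
via trees of height at most `h`. -/
inductive TD (g : ContextFreeGrammar T) : List (Sym g) → List T → ℕ → Prop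
  | nil (h : ℕ) : TD g [] [] h
  | term (t : T) {ss w h} (hd : TD g ss w h) : TD g (.terminal t :: ss) (t :: w) h
  | node (r : ContextFreeRule T g.NT) (hr : r ∈ g.rules) {w₁ ss w₂ h}
      (h1 : TD g r.output w₁ h) (h2 : TD g ss w₂ (h+1)) :
      TD g (.nonterminal r.input :: ss) (w₁ ++ w₂) (h+1)

lemma TD.mono {ss w h h'} (hd : TD g ss w h) (hh : h ≤ h') : TD g ss w h' := by
  induction hd generalizing h' with
  | nil => exact .nil h'
  | term t _ ih => exact .term t (ih hh)
  | node r hr h1 h2 ih1 ih2 =>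
    obtain ⟨k, rfl⟩ : ∃ k, h' = k + 1 := ⟨h' - 1, by omega⟩
    exact .node r hr (ih1 (by omega)) (ih2 (by omega))

lemma TD.append {ss₁ w₁ ss₂ w₂ h} (d1 : TD g ss₁ w₁ h) (d2 : TD g ss₂ w₂ h) :
    TD g (ss₁ ++ ss₂) (w₁ ++ w₂) h := by
  induction d1 with
  | nil => simpa
  | term t _ ih => exact .term t (ih d2)
  | node r hr h1 _ _ ih2 => simpa using TD.node r hr h1 (ih2 d2)

lemma TD.split {ss₁ ss₂ : List (Sym g)} {w h} (hd : TD g (ss₁ ++ ss₂) w h) :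
    ∃ w₁ w₂, w = w₁ ++ w₂ ∧ TD g ss₁ w₁ h ∧ TD g ss₂ w₂ h := by
  induction ss₁ generalizing w with
  | nil => exact ⟨[], w, rfl, .nil h, hd⟩
  | cons s rest ih =>
    cases hd with
    | term t hd =>
      obtain ⟨w₁, w₂, rfl, d1, d2⟩ := ih hd
      exact ⟨t :: w₁, w₂, rfl, .term t d1, d2⟩
    | node r hr h1 h2 =>
      obtain ⟨w₁, w₂, rfl, d1, d2⟩ := ih h2
      exact ⟨_ ++ w₁, w₂, by simp, .node r hr h1 d1, d2⟩

lemma TD.sound {ss w h} (hd : TD g ss w h) : g.Derives ss (w.map Symbol.terminal) := by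
  induction hd with
  | nil => simpa using Derives.refl (g := g) []
  | term t hd ih =>
    have := ih.append_left [Symbol.terminal t]
    simpa using this
  | @node r hr w₁ ss' w₂ h' h1 h2 ih1 ih2 =>
    have step : g.Produces (Symbol.nonterminal r.input :: ss') (r.output ++ ss') :=
      ⟨r, hr, ContextFreeRule.Rewrites.head ss'⟩
    refine (step.trans_derives ?_)
    have d1 := ih1.append_right ss'
    have d2 := ih2.append_left (List.map Symbol.terminal w₁)
    simpa using d1.trans d2

lemma TD.length_le {ss w h} (hd : TD g ss w h) {K : ℕ} (hK : 1 ≤ K)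
    (hout : ∀ r ∈ g.rules, r.output.length ≤ K) :
    w.length ≤ ss.length * K ^ h := by
  induction hd with
  | nil => simp
  | @term t ss' w' h' hd ih =>
    have h1K : 1 ≤ K ^ h' := Nat.one_le_pow _ _ hK
    simp only [List.length_cons]
    nlinarith
  | @node r hr w₁ ss' w₂ h' h1 h2 ih1 ih2 =>
    have hr1 : r.output.length ≤ K := hout r hr
    have hKh : (1:ℕ) ≤ K ^ h' := Nat.one_le_pow _ _ hK
    simp only [List.length_append, List.length_cons]
    have e2 : r.output.length * K ^ h' ≤ K * K ^ h' := Nat.mul_le_mul_right _ hr1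
    have e3 : K * K ^ h' = K ^ (h'+1) := (pow_succ K h').symm ▸ (mul_comm K (K^h'))
    nlinarith [ih1, ih2]

lemma nt_head_step {A : g.NT} {n : ℕ} {w : List (Sym g)}
    (hd : DerivesIn g (n+1) [Symbol.nonterminal A] w) :
    ∃ r ∈ g.rules, r.input = A ∧ DerivesIn g n r.output w := by
  cases hd with
  | head hp hd =>
    obtain ⟨r, hrmem, hr⟩ := hp
    obtain ⟨p, q, h1, h2⟩ := hr.exists_parts
    have hp0 : p = [] ∧ q = [] ∧ (Symbol.nonterminal A : Symbol T g.NT) = Symbol.nonterminal r.input := by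
      cases p with
      | nil =>
        cases q with
        | nil => simpa using h1
        | cons x xs => simp at h1
      | cons x xs =>
        exfalso
        have := congrArg List.length h1
        simp at this
    obtain ⟨rfl, rfl, hA⟩ := hp0
    simp at hA
    refine ⟨r, hrmem, hA.symm, ?_⟩
    rw [h2] at hd
    simpa using hd

lemma complete : ∀ n : ℕ, ∀ ss : List (Sym g), ∀ k ≤ n, ∀ w : List T,
    DerivesIn g k ss (w.map Symbol.terminal) → ∃ h, TD g ss w h := by
  intro n
  induction n using Nat.strong_induction_on with
  | _ n IH =>
    intro ss
    induction ss with
    | nil =>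
      intro k hk w hd
      have := hd.nil_eq
      have hw : w = [] := by simpa using this.symm
      exact ⟨0, hw ▸ TD.nil 0⟩
    | cons s rest ihss =>
      intro k hk w hd
      have hd' : DerivesIn g k ([s] ++ rest) (w.map Symbol.terminal) := by simpa using hd
      obtain ⟨p', q', n₁, n₂, hw, hn, d1, d2⟩ := hd'.append_split
      -- p' ++ q' is a terminal string
      obtain ⟨w₁, w₂, rfl, rfl, rfl⟩ :
          ∃ w₁ w₂, w = w₁ ++ w₂ ∧ p' = w₁.map Symbol.terminal ∧ q' = w₂.map Symbol.terminal := by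
        rcases List.map_eq_append_iff.mp hw with ⟨w₁, w₂, rfl, h1, h2⟩
        exact ⟨w₁, w₂, rfl, h1.symm, h2.symm⟩
      obtain ⟨h₂, t2⟩ := ihss n₂ (by omega) w₂ d2
      cases s with
      | terminal t =>
        -- derivation from [terminal t] is trivial
        have : w₁.map Symbol.terminal = ([Symbol.terminal t] : List (Sym g)) := by
          have := terminal_derivesIn_eq (w := [t]) (by simpa using d1)
          simpa using this
        have hw1 : w₁ = [t] := by
          cases w₁ with
          | nil => simp at this
          | cons x xs => simp at this; simp [this]
        subst hw1
        exact ⟨h₂, .term t t2⟩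
      | nonterminal A =>
        cases n₁ with
        | zero =>
          exfalso
          have heq : [(Symbol.nonterminal A : Sym g)] = w₁.map Symbol.terminal :=
            d1.zero_eq
          have : (Symbol.nonterminal A : Sym g) ∈ w₁.map Symbol.terminal := by
            rw [← heq]; simp
          simp at this
        | succ m =>
          obtain ⟨r, hrmem, rfl, dout⟩ := nt_head_step d1
          obtain ⟨h₁, t1⟩ := IH m (by omega) r.output m le_rfl w₁ dout
          exact ⟨max h₁ h₂ + 1,
            .node r hrmem (t1.mono (le_max_left _ _))
              ((t2.mono (le_max_right _ _)).mono (Nat.le_succ _))⟩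



lemma TD.nil_inv {w : List T} {h : ℕ} (hd : TD g [] w h) : w = [] := by
  cases hd; rfl

lemma TD.singleton_nt_inv {A : g.NT} {w : List T} {h : ℕ}
    (hd : TD g [Symbol.nonterminal A] w h) :
    ∃ r ∈ g.rules, r.input = A ∧ ∃ hp, h = hp + 1 ∧ TD g r.output w hp := by
  generalize hss : [Symbol.nonterminal A] = ss at hd
  cases hd with
  | nil => simp at hss
  | term t hd => simp at hss
  | node r hr h1 h2 =>
    injection hss with ha hb
    injection ha with hA
    have hw2 := TD.nil_inv (hb ▸ h2)
    exact ⟨r, hr, hA.symm, _, rfl, by simpa [hw2] using h1⟩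

noncomputable def NTs (g : ContextFreeGrammar T) : Finset g.NT :=
  insert g.initial (g.rules.biUnion (fun r =>
    insert r.input (r.output.filterMap (fun s => match s with
      | .nonterminal B => some B
      | .terminal _ => none)).toFinset))

lemma input_mem_NTs {r : ContextFreeRule T g.NT} (hr : r ∈ g.rules) : r.input ∈ NTs g := by
  unfold NTs
  simp only [Finset.mem_insert, Finset.mem_biUnion]
  exact Or.inr ⟨r, hr, by simp⟩

lemma output_mem_NTs {r : ContextFreeRule T g.NT} (hr : r ∈ g.rules) {B : g.NT}
    (hB : Symbol.nonterminal B ∈ r.output) : B ∈ NTs g := by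
  unfold NTs
  simp only [Finset.mem_insert, Finset.mem_biUnion]
  refine Or.inr ⟨r, hr, ?_⟩
  simp only [Finset.mem_insert, List.mem_toFinset, List.mem_filterMap]
  exact Or.inr ⟨_, hB, rfl⟩

lemma initial_mem_NTs : g.initial ∈ NTs g := by
  unfold NTs; simp

/-- `w` admits a pumpable decomposition rooted at `A`. -/
def Pump (g : ContextFreeGrammar T) (A : g.NT) (w : List T) : Prop :=
  ∃ (B : g.NT) (x u y v z : List T),
    w = x ++ u ++ y ++ v ++ z ∧ (u ++ v) ≠ [] ∧
    g.Derives [Symbol.nonterminal A]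
      (x.map Symbol.terminal ++ [Symbol.nonterminal B] ++ z.map Symbol.terminal) ∧
    g.Derives [Symbol.nonterminal B]
      (u.map Symbol.terminal ++ [Symbol.nonterminal B] ++ v.map Symbol.terminal) ∧
    g.Derives [Symbol.nonterminal B] (y.map Symbol.terminal)

/-- List version of pump, relative to a sentential form `ss`. -/
def PumpL (g : ContextFreeGrammar T) (ss : List (Sym g)) (w : List T) : Prop :=
  ∃ (B : g.NT) (x u y v z : List T),
    w = x ++ u ++ y ++ v ++ z ∧ (u ++ v) ≠ [] ∧
    g.Derives ss
      (x.map Symbol.terminal ++ [Symbol.nonterminal B] ++ z.map Symbol.terminal) ∧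
    g.Derives [Symbol.nonterminal B]
      (u.map Symbol.terminal ++ [Symbol.nonterminal B] ++ v.map Symbol.terminal) ∧
    g.Derives [Symbol.nonterminal B] (y.map Symbol.terminal)

/-- Some ancestor nonterminal `C ∈ S` reoccurs below `ss` with a small subtree. -/
def HitL (g : ContextFreeGrammar T) (S : Finset g.NT) (H : ℕ) (ss : List (Sym g))
    (w : List T) : Prop :=
  ∃ C ∈ S, ∃ (x y z : List T) (h' : ℕ),
    w = x ++ y ++ z ∧
    g.Derives ss
      (x.map Symbol.terminal ++ [Symbol.nonterminal C] ++ z.map Symbol.terminal) ∧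
    TD g [Symbol.nonterminal C] y h' ∧ h' ≤ H

lemma PumpL.cons_terminal {t : T} {ss w} (h : PumpL g ss w) :
    PumpL g (Symbol.terminal t :: ss) (t :: w) := by
  obtain ⟨B, x, u, y, v, z, hw, huv, h1, h2, h3⟩ := h
  refine ⟨B, t :: x, u, y, v, z, by simp [hw], huv, ?_, h2, h3⟩
  have := h1.append_left [Symbol.terminal t]
  simpa using this

lemma HitL.cons_terminal {t : T} {S H ss w} (h : HitL g S H ss w) :
    HitL g S H (Symbol.terminal t :: ss) (t :: w) := by
  obtain ⟨C, hC, x, y, z, h', hw, h1, h2, h3⟩ := h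
  refine ⟨C, hC, t :: x, y, z, h', by simp [hw], ?_, h2, h3⟩
  have := h1.append_left [Symbol.terminal t]
  simpa using this

/-- Composition: expand the head of a sentential form and derive the tail to terminals. -/
lemma derives_cons_of_head_tail {s : Sym g} {X : List (Sym g)} {ss' : List (Sym g)} {w₂ : List T}
    (hhead : g.Derives [s] X) (htail : g.Derives ss' (w₂.map Symbol.terminal)) :
    g.Derives (s :: ss') (X ++ w₂.map Symbol.terminal) := by
  have := (hhead.append_right ss').trans (htail.append_left X)
  simpa using this

/-- The inner (forest) lemma. -/
lemma innerM {K : ℕ} (hK : 1 ≤ K)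
    {H : ℕ} {S' : Finset g.NT}
    (MIH : ∀ h' ≤ H, ∀ A : g.NT, ∀ w : List T, A ∉ S' → A ∈ NTs g →
      TD g [Symbol.nonterminal A] w h' →
      Pump g A w ∨ HitL g S' H [Symbol.nonterminal A] w ∨
        w.length ≤ K ^ ((NTs g \ S').card)) :
    ∀ (ss : List (Sym g)) (w : List T) (h : ℕ), TD g ss w h → h ≤ H →
      (∀ B : g.NT, Symbol.nonterminal B ∈ ss → B ∈ NTs g) →
      PumpL g ss w ∨ HitL g S' H ss w ∨
        w.length ≤ ss.length * K ^ ((NTs g \ S').card) := by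
  intro ss w h hd
  induction hd with
  | nil => intro _ _; right; right; simp
  | @term t ss' w' h' hd ih =>
    intro hH hss
    rcases ih hH (fun B hB => hss B (by simp [hB])) with hP | hHit | hlen
    · exact Or.inl hP.cons_terminal
    · exact Or.inr (Or.inl hHit.cons_terminal)
    · right; right
      have h1K : 1 ≤ K ^ ((NTs g \ S').card) := Nat.one_le_pow _ _ hK
      simp only [List.length_cons]
      nlinarith
  | @node r hr w₁ ss' w₂ hp h1 h2 _ ih2 =>
    intro hH hss
    set B := r.input with hB
    have tB : TD g [Symbol.nonterminal B] w₁ (hp + 1) := by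
      have := TD.node r hr h1 (TD.nil (hp + 1))
      simpa using this
    by_cases hBS : B ∈ S'
    · right; left
      refine ⟨B, hBS, [], w₁, w₂, hp + 1, by simp, ?_, tB, hH⟩
      have := derives_cons_of_head_tail (Derives.refl [Symbol.nonterminal B]) (TD.sound h2)
      simpa using this
    · have hBNT : B ∈ NTs g := hss B (by simp)
      rcases MIH (hp + 1) hH B w₁ hBS hBNT tB with hP | hHit | hlen
      · left
        obtain ⟨B', x, u, y, v, z, rfl, huv, hx1, hx2, hx3⟩ := hP
        refine ⟨B', x, u, y, v, z ++ w₂, by simp, huv, ?_, hx2, hx3⟩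
        have := derives_cons_of_head_tail hx1 (TD.sound h2)
        simpa [List.append_assoc] using this
      · right; left
        obtain ⟨C, hC, x, y, z, h'', rfl, hx1, hx2, hx3⟩ := hHit
        refine ⟨C, hC, x, y, z ++ w₂, h'', by simp, ?_, hx2, hx3⟩
        have := derives_cons_of_head_tail hx1 (TD.sound h2)
        simpa [List.append_assoc] using this
      · rcases ih2 hH (fun B hB => hss B (by simp [hB])) with hP | hHit | hlen2
        · left
          obtain ⟨B', x, u, y, v, z, rfl, huv, hx1, hx2, hx3⟩ := hP
          refine ⟨B', w₁ ++ x, u, y, v, z, by simp, huv, ?_, hx2, hx3⟩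
          have := ((TD.sound tB).append_right ss').trans
            (hx1.append_left (w₁.map Symbol.terminal))
          simpa [List.append_assoc] using this
        · right; left
          obtain ⟨C, hC, x, y, z, h'', rfl, hx1, hx2, hx3⟩ := hHit
          refine ⟨C, hC, w₁ ++ x, y, z, h'', by simp, ?_, hx2, hx3⟩
          have := ((TD.sound tB).append_right ss').trans
            (hx1.append_left (w₁.map Symbol.terminal))
          simpa [List.append_assoc] using this
        · right; right
          simp only [List.length_append, List.length_cons]
          nlinarith



/-- The master lemma: pump, hit an ancestor, or be short. -/
lemma master {K : ℕ} (hK : 1 ≤ K) (hout : ∀ r ∈ g.rules, r.output.length ≤ K) :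
    ∀ h : ℕ, ∀ S : Finset g.NT, ∀ A : g.NT, ∀ w : List T,
    A ∉ S → A ∈ NTs g → S ⊆ NTs g → TD g [Symbol.nonterminal A] w h →
    Pump g A w ∨ HitL g S h [Symbol.nonterminal A] w ∨
      w.length ≤ K ^ ((NTs g \ S).card) := by
  intro h
  induction h using Nat.strong_induction_on with
  | _ h MH =>
  intro S A w hAS hANT hSNT hd
  obtain ⟨r, hrmem, hrA, hp, rfl, hfor⟩ := hd.singleton_nt_inv
  have hstep : g.Produces [Symbol.nonterminal A] r.output := by
    refine ⟨r, hrmem, ?_⟩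
    rw [← hrA]
    exact ContextFreeRule.Rewrites.input_output
  set S' : Finset g.NT := insert A S with hS'def
  have hS'NT : S' ⊆ NTs g := by
    intro x hx
    rcases Finset.mem_insert.mp hx with rfl | hx
    · exact hANT
    · exact hSNT hx
  have hcard : (NTs g \ S').card + 1 = (NTs g \ S).card := by
    have hA : A ∈ NTs g \ S := Finset.mem_sdiff.mpr ⟨hANT, hAS⟩
    have : NTs g \ S' = (NTs g \ S).erase A := by
      ext x
      simp only [hS'def, Finset.mem_sdiff, Finset.mem_insert, Finset.mem_erase]
      tauto
    rw [this, Finset.card_erase_of_mem hA]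
    have : 1 ≤ (NTs g \ S).card := Finset.card_pos.mpr ⟨A, hA⟩
    omega
  have hMIH : ∀ h' ≤ hp, ∀ B : g.NT, ∀ w' : List T, B ∉ S' → B ∈ NTs g →
      TD g [Symbol.nonterminal B] w' h' →
      Pump g B w' ∨ HitL g S' hp [Symbol.nonterminal B] w' ∨
        w'.length ≤ K ^ ((NTs g \ S').card) := by
    intro h' hh' B w' hBS hBNT hd'
    rcases MH h' (by omega) S' B w' hBS hBNT hS'NT hd' with hP | hHit | hlen
    · exact Or.inl hP
    · obtain ⟨C, hC, x, y, z, h'', hw, d1, d2, d3⟩ := hHit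
      exact Or.inr (Or.inl ⟨C, hC, x, y, z, h'', hw, d1, d2, by omega⟩)
    · exact Or.inr (Or.inr hlen)
  have houtNT : ∀ B : g.NT, Symbol.nonterminal B ∈ r.output → B ∈ NTs g :=
    fun B hB => output_mem_NTs hrmem hB
  rcases innerM hK hMIH r.output w hp hfor le_rfl houtNT with hP | hHit | hlen
  · left
    obtain ⟨B', x, u, y, v, z, rfl, huv, hx1, hx2, hx3⟩ := hP
    exact ⟨B', x, u, y, v, z, rfl, huv, hstep.trans_derives hx1, hx2, hx3⟩
  · obtain ⟨C, hC, x, y, z, h'', rfl, hx1, hx2, hx3⟩ := hHit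
    rcases Finset.mem_insert.mp hC with rfl | hCS
    · -- hit the root itself
      by_cases hxz : x = [] ∧ z = []
      · -- same word, smaller tree: recurse
        obtain ⟨rfl, rfl⟩ := hxz
        have hres := MH h'' (by omega) S C ([] ++ y ++ []) hAS hANT hSNT
          (by simpa using hx2)
        rcases hres with hP | hHit | hlen
        · exact Or.inl (by simpa using hP)
        · obtain ⟨D, hD, x', y', z', h3, hw, d1, d2, d3⟩ := hHit
          exact Or.inr (Or.inl ⟨D, hD, x', y', z', h3, by simpa using hw,
            d1, d2, by omega⟩)
        · exact Or.inr (Or.inr (by simpa using hlen))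
      · -- proper loop: pump!
        left
        refine ⟨C, [], x, y, z, [], by simp, ?_, ?_, ?_, TD.sound hx2⟩
        · intro hc
          apply hxz
          constructor
          · by_contra hx0
            obtain ⟨a, x', rfl⟩ := List.exists_cons_of_ne_nil hx0
            simp at hc
          · rcases List.append_eq_nil_iff.mp hc with ⟨-, hz⟩
            by_contra hz0
            obtain ⟨rfl, h⟩ : x = [] ∧ z = [] := ⟨by
              rcases List.append_eq_nil_iff.mp hc with ⟨h1, -⟩; exact h1, by
              rcases List.append_eq_nil_iff.mp hc with ⟨-, h2⟩; exact h2⟩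
            exact hz0 h
        · simpa using Derives.refl ([Symbol.nonterminal C] : List (Sym g))
        · exact hstep.trans_derives hx1
    · -- hit a strict ancestor: pass it up
      exact Or.inr (Or.inl ⟨C, hCS, x, y, z, h'', rfl,
        hstep.trans_derives hx1, hx2, by omega⟩)
  · right; right
    calc w.length ≤ r.output.length * K ^ ((NTs g \ S').card) := hlen
    _ ≤ K * K ^ ((NTs g \ S').card) := Nat.mul_le_mul_right _ (hout r hrmem)
    _ = K ^ ((NTs g \ S').card + 1) := by rw [pow_succ]; ring
    _ = K ^ ((NTs g \ S).card) := by rw [hcard]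



lemma flatten_replicate_append {α : Type*} (i : ℕ) (v : List α) :
    (List.replicate i v).flatten ++ v = v ++ (List.replicate i v).flatten := by
  induction i with
  | zero => simp
  | succ i ih => simp [List.replicate_succ, List.append_assoc, ih]

lemma Pump.derives_pumped {A : g.NT} {w : List T} (hP : Pump g A w) :
    ∃ x u y v z : List T, w = x ++ u ++ y ++ v ++ z ∧ (u ++ v) ≠ [] ∧
    ∀ i : ℕ, g.Derives [Symbol.nonterminal A]
      ((x ++ (List.replicate i u).flatten ++ y ++ (List.replicate i v).flatten ++ z).map
        Symbol.terminal) := by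
  obtain ⟨B, x, u, y, v, z, rfl, huv, h1, h2, h3⟩ := hP
  refine ⟨x, u, y, v, z, rfl, huv, ?_⟩
  have key : ∀ i : ℕ, g.Derives [Symbol.nonterminal B]
      (((List.replicate i u).flatten ++ y ++ (List.replicate i v).flatten).map
        Symbol.terminal) := by
    intro i
    induction i with
    | zero => simpa using h3
    | succ i ih =>
      have e1 := (ih.append_right (v.map Symbol.terminal)).append_left (u.map Symbol.terminal)
      have := h2.trans (by simpa [List.append_assoc] using e1)
      simpa [List.replicate_succ, List.append_assoc, flatten_replicate_append] using this
  intro i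
  have e1 := ((key i).append_right (z.map Symbol.terminal)).append_left (x.map Symbol.terminal)
  have := h1.trans (by simpa [List.append_assoc] using e1)
  simpa [List.append_assoc] using this

/-- Weak pumping lemma for context-free grammars. -/
theorem weak_pumping (g : ContextFreeGrammar T) :
    ∃ p : ℕ, 1 ≤ p ∧ ∀ w ∈ g.language, p ≤ w.length → Pump g g.initial w := by
  classical
  set K : ℕ := max 1 (g.rules.sup fun r => r.output.length) with hKdef
  have hK : 1 ≤ K := le_max_left _ _
  have hout : ∀ r ∈ g.rules, r.output.length ≤ K := by
    intro r hr
    have h1 : r.output.length ≤ g.rules.sup (fun r => r.output.length) :=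
      Finset.le_sup (f := fun r => r.output.length) hr
    exact h1.trans (le_max_right _ _)
  refine ⟨K ^ ((NTs g \ ∅).card) + 1, by omega, ?_⟩
  intro w hw hlen
  rw [ContextFreeGrammar.mem_language_iff] at hw
  obtain ⟨n, hd⟩ := derives_iff_derivesIn.mp hw
  obtain ⟨h, ht⟩ := complete n [Symbol.nonterminal g.initial] n le_rfl w hd
  rcases master hK hout h ∅ g.initial w (by simp) initial_mem_NTs (by simp) ht with
    hP | hHit | hl
  · exact hP
  · obtain ⟨C, hC, -⟩ := hHit
    simp at hC
  · omega

end MyPump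

namespace CA


/-- The word `aⁿbⁿcⁿ`. -/
def word (n : ℕ) : List ABC :=
  List.replicate n .a ++ List.replicate n .b ++ List.replicate n .c

lemma bot_not_mem_word (n : ℕ) : ABC.bot ∉ word n := by
  simp [word, List.mem_replicate]

lemma word_length (n : ℕ) : (word n).length = 3 * n := by
  simp [word]; ring

/-- The local rule (radius 2), as a function of neighbors `x₋₂ x₋₁ x₀ x₁`. -/
def rule (w x y r : ABC) : ABC :=
  match y with
  | .a => .a
  | .b => .b
  | .c => if x = .b then .b else .c
  | .bot => if r = .a then .a else if x = .c ∨ w = .c then .c else .bot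

def caF : (Fin (2 * 2 + 1) → ABC) → ABC := fun v => rule (v 0) (v 1) (v 2) (v 3)

lemma glob_caF (c : ℤ → ABC) (z : ℤ) :
    glob 2 caF c z = rule (c (z - 2)) (c (z - 1)) (c z) (c (z + 1)) := by
  show rule (c (z + (0 : ℤ) - 2)) (c (z + (1 : ℤ) - 2)) (c (z + (2 : ℤ) - 2))
    (c (z + (3 : ℤ) - 2)) = _
  rw [show z + (0 : ℤ) - 2 = z - 2 from by ring, show z + (1 : ℤ) - 2 = z - 1 from by ring,
    show z + (2 : ℤ) - 2 = z from by ring, show z + (3 : ℤ) - 2 = z + 1 from by ring]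

/-- The configuration at time `n` : `aⁿ⁺¹` on `[-n,0]`, `bⁿ⁺¹` on `[1,n+1]`,
`cⁿ⁺¹` on `[n+2,2n+2]`. -/
def cfg (n : ℕ) : ℤ → ABC := fun z =>
  if z < -(n : ℤ) then .bot
  else if z ≤ 0 then .a
  else if z ≤ n + 1 then .b
  else if z ≤ 2 * n + 2 then .c
  else .bot

lemma cfg_botl {n : ℕ} {z : ℤ} (h : z < -(n : ℤ)) : cfg n z = .bot := by
  unfold cfg; rw [if_pos h]

lemma cfg_a {n : ℕ} {z : ℤ} (h1 : -(n : ℤ) ≤ z) (h2 : z ≤ 0) : cfg n z = .a := by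
  unfold cfg; rw [if_neg (by omega), if_pos h2]

lemma cfg_b {n : ℕ} {z : ℤ} (h1 : 1 ≤ z) (h2 : z ≤ (n : ℤ) + 1) : cfg n z = .b := by
  unfold cfg; rw [if_neg (by omega), if_neg (by omega), if_pos h2]

lemma cfg_c {n : ℕ} {z : ℤ} (h1 : (n : ℤ) + 2 ≤ z) (h2 : z ≤ 2 * n + 2) : cfg n z = .c := by
  unfold cfg; rw [if_neg (by omega), if_neg (by omega), if_neg (by omega), if_pos h2]

lemma cfg_botr {n : ℕ} {z : ℤ} (h : 2 * (n : ℤ) + 3 ≤ z) : cfg n z = .bot := by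
  unfold cfg; rw [if_neg (by omega), if_neg (by omega), if_neg (by omega), if_neg (by omega)]

lemma step (n : ℕ) (z : ℤ) : glob 2 caF (cfg n) z = cfg (n + 1) z := by
  rw [glob_caF]
  rcases lt_trichotomy z (-(n : ℤ) - 1) with hz | hz | hz
  · rw [show cfg n (z - 2) = .bot from cfg_botl (by omega),
      show cfg n (z - 1) = .bot from cfg_botl (by omega),
      show cfg n z = .bot from cfg_botl (by omega),
      show cfg n (z + 1) = .bot from cfg_botl (by omega),
      show cfg (n + 1) z = .bot from cfg_botl (by push_cast; omega)]
    simp [rule]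
  · subst hz
    rw [show cfg n (-(n:ℤ) - 1 - 2) = .bot from cfg_botl (by omega),
      show cfg n (-(n:ℤ) - 1 - 1) = .bot from cfg_botl (by omega),
      show cfg n (-(n:ℤ) - 1) = .bot from cfg_botl (by omega),
      show cfg n (-(n:ℤ) - 1 + 1) = .a from cfg_a (by omega) (by omega),
      show cfg (n + 1) (-(n:ℤ) - 1) = .a from cfg_a (by push_cast; omega) (by omega)]
    simp [rule]
  · by_cases ha : z ≤ 0
    · rw [show cfg n z = .a from cfg_a (by omega) ha,
        show cfg (n + 1) z = .a from cfg_a (by push_cast; omega) ha]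
      simp [rule]
    · by_cases hb : z ≤ (n : ℤ) + 1
      · rw [show cfg n z = .b from cfg_b (by omega) hb,
          show cfg (n + 1) z = .b from cfg_b (by omega) (by push_cast; omega)]
        simp [rule]
      · by_cases hc1 : z = (n : ℤ) + 2
        · subst hc1
          rw [show cfg n ((n:ℤ) + 2) = .c from cfg_c (by omega) (by omega),
            show cfg n ((n:ℤ) + 2 - 1) = .b from cfg_b (by omega) (by omega),
            show cfg (n + 1) ((n:ℤ) + 2) = .b from cfg_b (by omega) (by push_cast; omega)]
          simp [rule]
        · by_cases hc2 : z ≤ 2 * (n : ℤ) + 2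
          · rw [show cfg n z = .c from cfg_c (by omega) hc2,
              show cfg n (z - 1) = .c from cfg_c (by omega) (by omega),
              show cfg (n + 1) z = .c from cfg_c (by push_cast; omega) (by push_cast; omega)]
            simp [rule]
          · by_cases hd1 : z = 2 * (n : ℤ) + 3
            · subst hd1
              rw [show cfg n (2 * (n:ℤ) + 3) = .bot from cfg_botr (by omega),
                show cfg n (2 * (n:ℤ) + 3 - 1) = .c from cfg_c (by omega) (by omega),
                show cfg n (2 * (n:ℤ) + 3 + 1) = .bot from cfg_botr (by omega),
                show cfg (n + 1) (2 * (n:ℤ) + 3) = .c from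
                  cfg_c (by push_cast; omega) (by push_cast; omega)]
              simp [rule]
            · by_cases hd2 : z = 2 * (n : ℤ) + 4
              · subst hd2
                rw [show cfg n (2 * (n:ℤ) + 4) = .bot from cfg_botr (by omega),
                  show cfg n (2 * (n:ℤ) + 4 - 1) = .bot from cfg_botr (by omega),
                  show cfg n (2 * (n:ℤ) + 4 - 2) = .c from cfg_c (by omega) (by omega),
                  show cfg n (2 * (n:ℤ) + 4 + 1) = .bot from cfg_botr (by omega),
                  show cfg (n + 1) (2 * (n:ℤ) + 4) = .c from
                    cfg_c (by push_cast; omega) (by push_cast; omega)]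
                simp [rule]
              · rw [show cfg n z = .bot from cfg_botr (by omega),
                  show cfg n (z - 1) = .bot from cfg_botr (by omega),
                  show cfg n (z - 2) = .bot from cfg_botr (by omega),
                  show cfg n (z + 1) = .bot from cfg_botr (by omega),
                  show cfg (n + 1) z = .bot from cfg_botr (by push_cast; omega)]
                simp [rule]

lemma word_getD (k : ℕ) (m : ℕ) :
    (word k).getD m .bot =
      if m < k then .a else if m < 2 * k then .b else if m < 3 * k then .c else .bot := by
  unfold word
  rcases Nat.lt_or_ge m k with h | h
  · rw [List.getD_eq_getElem _ _ (by simp; omega)]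
    rw [if_pos h]
    rw [List.getElem_append_left (by simp; omega)]
    rw [List.getElem_append_left (by simp [h])]
    simp
  · rcases Nat.lt_or_ge m (2 * k) with h2 | h2
    · rw [List.getD_eq_getElem _ _ (by simp; omega)]
      rw [if_neg (by omega), if_pos h2]
      rw [List.getElem_append_left (by simp; omega)]
      rw [List.getElem_append_right (by simp; omega)]
      simp
    · rcases Nat.lt_or_ge m (3 * k) with h3 | h3
      · rw [List.getD_eq_getElem _ _ (by simp; omega)]
        rw [if_neg (by omega), if_neg (by omega), if_pos h3]
        rw [List.getElem_append_right (by simp; omega)]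
        simp
      · rw [if_neg (by omega), if_neg (by omega), if_neg (by omega)]
        apply List.getD_eq_default
        simp; omega

lemma padW_word (n : ℕ) (z : ℤ) : padW ABC.bot (word (n + 1)) (z + n) = cfg n z := by
  unfold padW
  rw [word_length]
  by_cases h : 0 ≤ z + (n:ℤ) ∧ z + (n : ℤ) < ((3 * (n + 1) : ℕ) : ℤ)
  · rw [if_pos h]
    rw [word_getD]
    obtain ⟨h1, h2⟩ := h
    have htn : ((z + n).toNat : ℤ) = z + n := Int.toNat_of_nonneg h1
    by_cases c1 : z ≤ 0
    · rw [if_pos (by omega), cfg_a (by omega) c1]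
    · by_cases c2 : z ≤ (n : ℤ) + 1
      · rw [if_neg (by omega), if_pos (by omega), cfg_b (by omega) c2]
      · rw [if_neg (by omega), if_neg (by omega), if_pos (by omega),
          cfg_c (by omega) (by omega)]
  · rw [if_neg h]
    rcases not_and_or.mp h with h1 | h2
    · rw [cfg_botl (by omega)]
    · rw [cfg_botr (by omega)]

lemma iterate_cfg (n : ℕ) : (glob 2 caF)^[n] (padW ABC.bot [ABC.a, ABC.b, ABC.c]) = cfg n := by
  induction n with
  | zero =>
    funext z
    show padW ABC.bot [ABC.a, ABC.b, ABC.c] z = cfg 0 z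
    have : [ABC.a, ABC.b, ABC.c] = word 1 := by rfl
    rw [this]
    have := padW_word 0 z
    simpa using this
  | succ n ih =>
    rw [Function.iterate_succ_apply', ih]
    funext z
    exact step n z



open MyPump

/-! ### Words placed on the line -/

lemma padW_ne_bot_iff {w : List ABC} (hw : ABC.bot ∉ w) (ζ : ℤ) :
    padW ABC.bot w ζ ≠ ABC.bot ↔ (0 ≤ ζ ∧ ζ < (w.length : ℤ)) := by
  unfold padW
  by_cases h : 0 ≤ ζ ∧ ζ < (w.length : ℤ)
  · rw [if_pos h]
    have hlt : ζ.toNat < w.length := by omega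
    rw [List.getD_eq_getElem _ _ hlt]
    exact iff_of_true (fun hc => hw (hc ▸ List.getElem_mem hlt)) h
  · rw [if_neg h]
    simp [h]

lemma padW_eq_unique {W w : List ABC} {t : ℤ} (hW : ABC.bot ∉ W) (hw : ABC.bot ∉ w)
    (hW0 : W ≠ []) (h : ∀ ζ : ℤ, padW ABC.bot W ζ = padW ABC.bot w (ζ - t)) : w = W := by
  have hsupp : ∀ ζ : ℤ, (0 ≤ ζ ∧ ζ < (W.length : ℤ)) ↔
      (0 ≤ ζ - t ∧ ζ - t < (w.length : ℤ)) := by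
    intro ζ
    rw [← padW_ne_bot_iff hW ζ, ← padW_ne_bot_iff hw (ζ - t), h ζ]
  have hWlen : 0 < (W.length : ℤ) := by
    have := List.length_pos_iff.mpr hW0
    omega
  have hwlen : 0 < (w.length : ℤ) := by
    by_contra hc
    have h0 := (hsupp 0).mp ⟨le_refl 0, hWlen⟩
    omega
  have ht0 : t = 0 := by
    have h1 := (hsupp 0).mp ⟨le_refl 0, hWlen⟩
    have h2 := (hsupp t).mpr ⟨by omega, by omega⟩
    omega
  subst ht0
  have hlen : W.length = w.length := by
    have h1 := hsupp (W.length : ℤ)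
    have h2 := hsupp (w.length : ℤ)
    simp only [sub_zero] at h1 h2
    omega
  symm
  apply List.ext_getElem hlen
  intro i hi1 hi2
  have hpin := h (i : ℤ)
  unfold padW at hpin
  rw [if_pos ⟨by omega, by omega⟩, sub_zero, if_pos ⟨by omega, by omega⟩] at hpin
  rw [Int.toNat_natCast] at hpin
  rw [← List.getD_eq_getElem W ABC.bot hi1, ← List.getD_eq_getElem w ABC.bot hi2]
  exact hpin

/-! ### Combinatorics of `aⁿbⁿcⁿ` -/

def rank : ABC → ℕ
  | .a => 0
  | .b => 1
  | .c => 2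
  | .bot => 3

lemma pairwise_word (m : ℕ) : (word m).Pairwise (fun s t => rank s ≤ rank t) := by
  unfold word
  rw [List.pairwise_append, List.pairwise_append]
  refine ⟨⟨List.pairwise_replicate.mpr (by simp), List.pairwise_replicate.mpr (by simp), ?_⟩,
    List.pairwise_replicate.mpr (by simp), ?_⟩
  · intro s hs t ht
    rw [List.eq_of_mem_replicate hs, List.eq_of_mem_replicate ht]
    decide
  · intro s hs t ht
    rw [List.mem_append] at hs
    rw [List.eq_of_mem_replicate ht]
    rcases hs with hs | hs <;> rw [List.eq_of_mem_replicate hs] <;> decide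

lemma count_word (m : ℕ) (l : ABC) (hl : l ≠ ABC.bot) : (word m).count l = m := by
  unfold word
  rw [List.count_append, List.count_append, List.count_replicate, List.count_replicate,
    List.count_replicate]
  cases l <;> simp_all <;> rfl

lemma const_of_pairwise_double {u : List ABC}
    (h : (u ++ u).Pairwise (fun s t => rank s ≤ rank t)) :
    ∀ s ∈ u, ∀ t ∈ u, s = t := by
  intro s hs t ht
  obtain ⟨-, -, hcross⟩ := List.pairwise_append.mp h
  have h1 := hcross s hs t ht
  have h2 := hcross t ht s hs
  cases s <;> cases t <;> first | rfl | (exfalso; revert h1 h2; decide)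

theorem not_cf :
    ¬ ∃ g : ContextFreeGrammar ABC, ∀ w : List ABC, w ∈ g.language ↔
      ∃ n : ℕ, 1 ≤ n ∧ w = word n := by
  rintro ⟨g, hg⟩
  obtain ⟨p, hp1, hpump⟩ := MyPump.weak_pumping g
  have hwlang : word p ∈ g.language := (hg _).2 ⟨p, hp1, rfl⟩
  have hlenp : p ≤ (word p).length := by rw [word_length]; omega
  obtain ⟨x, u, y, v, zz, hw, huv, hder⟩ := (hpump _ hwlang hlenp).derives_pumped
  have hw2lang : x ++ (u ++ u) ++ y ++ (v ++ v) ++ zz ∈ g.language := by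
    rw [ContextFreeGrammar.mem_language_iff]
    have := hder 2
    have h2 : (List.replicate 2 u).flatten = u ++ u := by
      simp [List.replicate_succ]
    have h2' : (List.replicate 2 v).flatten = v ++ v := by
      simp [List.replicate_succ]
    rw [h2, h2'] at this
    exact this
  obtain ⟨m, hm1, hm⟩ := (hg _).1 hw2lang
  -- u and v are constant words
  have hsor : (word m).Pairwise (fun s t => rank s ≤ rank t) := pairwise_word m
  rw [← hm] at hsor
  have huu : List.Sublist (u ++ u) (x ++ (u ++ u) ++ y ++ (v ++ v) ++ zz) := by
    have : List.IsInfix (u ++ u) (x ++ (u ++ u) ++ y ++ (v ++ v) ++ zz) :=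
      ⟨x, y ++ (v ++ v) ++ zz, by simp [List.append_assoc]⟩
    exact this.sublist
  have hvv : List.Sublist (v ++ v) (x ++ (u ++ u) ++ y ++ (v ++ v) ++ zz) := by
    have : List.IsInfix (v ++ v) (x ++ (u ++ u) ++ y ++ (v ++ v) ++ zz) :=
      ⟨x ++ (u ++ u) ++ y, zz, by simp [List.append_assoc]⟩
    exact this.sublist
  have hcu : ∀ s ∈ u, ∀ t ∈ u, s = t :=
    const_of_pairwise_double (List.Pairwise.sublist huu hsor)
  have hcv : ∀ s ∈ v, ∀ t ∈ v, s = t :=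
    const_of_pairwise_double (List.Pairwise.sublist hvv hsor)
  -- counts
  have hcnt : ∀ l : ABC, l ≠ ABC.bot → p + (u.count l + v.count l) = m := by
    intro l hl
    have e1 : (x ++ (u ++ u) ++ y ++ (v ++ v) ++ zz).count l = m := by
      rw [hm, count_word m l hl]
    have e2 : (word p).count l = p := count_word p l hl
    rw [hw] at e2
    simp only [List.count_append] at e1 e2
    omega
  -- lengths
  have hlen2 : 3 * p + (u.length + v.length) = 3 * m := by
    have e1 : (x ++ (u ++ u) ++ y ++ (v ++ v) ++ zz).length = 3 * m := by
      rw [hm, word_length]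
    have e2 : (word p).length = 3 * p := word_length p
    rw [hw] at e2
    simp only [List.length_append] at e1 e2
    omega
  have hd : 1 ≤ m - p := by
    have hne : u.length + v.length ≠ 0 := by
      intro hc
      apply huv
      apply List.length_eq_zero_iff.mp
      simp only [List.length_append]
      omega
    omega
  -- each letter occurs in u ++ v
  have hocc : ∀ l : ABC, l ≠ ABC.bot → (l ∈ u ∨ l ∈ v) := by
    intro l hl
    have := hcnt l hl
    have : 0 < u.count l + v.count l := by omega
    rcases Nat.lt_or_ge 0 (u.count l) with h1 | h1
    · exact Or.inl (List.count_pos_iff.mp h1)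
    · exact Or.inr (List.count_pos_iff.mp (by omega))
  rcases hocc ABC.a (by simp) with ha | ha <;>
    rcases hocc ABC.b (by simp) with hb | hb <;>
      rcases hocc ABC.c (by simp) with hc | hc
  · exact absurd (hcu _ ha _ hb) (by decide)
  · exact absurd (hcu _ ha _ hb) (by decide)
  · exact absurd (hcu _ ha _ hc) (by decide)
  · exact absurd (hcv _ hb _ hc) (by decide)
  · exact absurd (hcu _ hb _ hc) (by decide)
  · exact absurd (hcv _ ha _ hc) (by decide)
  · exact absurd (hcv _ ha _ hb) (by decide)
  · exact absurd (hcv _ ha _ hb) (by decide)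

end CA


/-- There is a 1-D CA (some radius `r` and local rule `f`, with quiescent `⊥`) such that from
`c₀ = ⊥^ω a b c ⊥^ω` one has `G^n(c₀) = ⊥^ω a^{n+1} b^{n+1} c^{n+1} ⊥^ω` (up to position
shift) for all `n ≥ 0`; hence the generated language (of `⊥`-free words, up to shift) is
`{aⁿ bⁿ cⁿ | n ≥ 1}`, a language that is not context-free. -/
theorem stmt10 :
    (∃ (r : ℕ) (f : (Fin (2 * r + 1) → ABC) → ABC),
      f (fun _ => ABC.bot) = ABC.bot ∧
      (∀ n : ℕ, ∃ s : ℤ, ∀ z : ℤ,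
        (glob r f)^[n] (padW ABC.bot [ABC.a, ABC.b, ABC.c]) z =
          padW ABC.bot (List.replicate (n + 1) ABC.a ++ List.replicate (n + 1) ABC.b
            ++ List.replicate (n + 1) ABC.c) (z - s)) ∧
      ({ w : List ABC | ABC.bot ∉ w ∧
          ∃ (n : ℕ) (s : ℤ), ∀ z : ℤ,
            (glob r f)^[n] (padW ABC.bot [ABC.a, ABC.b, ABC.c]) z = padW ABC.bot w (z - s) }
        = { w : List ABC | ∃ n : ℕ, 1 ≤ n ∧
            w = List.replicate n ABC.a ++ List.replicate n ABC.b
              ++ List.replicate n ABC.c })) ∧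
    ¬ ∃ g : ContextFreeGrammar ABC,
        ∀ w : List ABC, w ∈ g.language ↔
          ∃ n : ℕ, 1 ≤ n ∧
            w = List.replicate n ABC.a ++ List.replicate n ABC.b
              ++ List.replicate n ABC.c := by
  constructor
  · refine ⟨2, CA.caF, rfl, ?_, ?_⟩
    · intro n
      refine ⟨-(n : ℤ), ?_⟩
      intro z
      rw [CA.iterate_cfg]
      rw [show z - -(n : ℤ) = z + n by ring]
      exact (CA.padW_word n z).symm
    · ext w
      simp only [Set.mem_setOf_eq]
      constructor
      · rintro ⟨hbot, n, s, hall⟩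
        refine ⟨n + 1, by omega, ?_⟩
        have key : ∀ ζ : ℤ, padW ABC.bot (CA.word (n + 1)) ζ =
            padW ABC.bot w (ζ - (s + n)) := by
          intro ζ
          have h1 := hall (ζ - n)
          rw [CA.iterate_cfg] at h1
          have h2 := CA.padW_word n (ζ - n)
          rw [show ζ - (n : ℤ) + n = ζ by ring] at h2
          rw [show ζ - (n : ℤ) - s = ζ - (s + n) by ring] at h1
          rw [h2]
          exact h1
        have hne : CA.word (n + 1) ≠ [] := by
          intro hc
          have := congrArg List.length hc
          rw [CA.word_length] at this
          simp at this
        exact CA.padW_eq_unique (CA.bot_not_mem_word (n + 1)) hbot hne key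
      · rintro ⟨n, hn, rfl⟩
        obtain ⟨k, rfl⟩ : ∃ k, n = k + 1 := ⟨n - 1, by omega⟩
        refine ⟨CA.bot_not_mem_word (k + 1), k, -(k : ℤ), ?_⟩
        intro z
        rw [CA.iterate_cfg]
        rw [show z - -(k : ℤ) = z + k by ring]
        exact (CA.padW_word k z).symm
  · exact CA.not_cf
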